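/- Let m be a positive integer. For n an exact divisor of m let a(n) ∈ ZMod (2m) be the unique element with a(n) ≡ −1 (mod 2n) and a(n) ≡ 1 (mod 2m/n), and let Ω(n) be the permutation matrix on ℂ^{ZMod (2m)} given by Ω(n)_{r r'} = 1 if r' = a(n)·r and 0 otherwise. Let 𝒮_{r r'} = (1/√(2m)) exp(−2πi r r'/(2m)). Let K be any finite set of exact divisors of m and set P = (∏_{n ∈ K} (I + Ω(n))/2) · (I − Ω(m))/2 (any order of the product). Then: (1) the matrices Ω(n), for n ranging over exact divisors of m, are commuting involutions; (2) P² = P; (3) 𝒮·P = P·𝒮; (4) 𝒮² = Ω(m), i.e. (𝒮²)_{r r'} = 1 if r' = −r and 0 otherwise; and (5) (𝒮 P)² = −P. -/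

import Mathlib

open Complex

/-- `n` is an exact divisor of `m`: a positive divisor with `gcd(n, m/n) = 1`. -/
def IsExactDivisor (m n : ℕ) : Prop := 0 < n ∧ n ∣ m ∧ Nat.gcd n (m / n) = 1

/-- `a = a(n)`: every integer lift `k` of `a ∈ ZMod (2m)` satisfies
`k ≡ −1 (mod 2n)` and `k ≡ 1 (mod 2m/n)`. -/
def IsAOf (m n : ℕ) (a : ZMod (2 * m)) : Prop :=
  ∀ k : ℤ, (k : ZMod (2 * m)) = a →
    ((2 * (n : ℤ)) ∣ k + 1 ∧ (2 * ((m / n : ℕ) : ℤ)) ∣ k - 1)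

/-- The S-matrix of the index-`m` Weil representation:
`𝒮_{r r'} = (1/√(2m))·exp(−2πi r r'/(2m))` (using the canonical lifts). -/
noncomputable def weilS (m : ℕ) : Matrix (ZMod (2 * m)) (ZMod (2 * m)) ℂ :=
  fun r r' => ((1 : ℂ) / Real.sqrt (2 * m)) *
    Complex.exp (-(2 * Real.pi * Complex.I * ((r.val * r'.val : ℕ) : ℂ)) / (2 * m))

/-- The permutation matrix of `r ↦ a·r` on `ZMod (2m)`. -/
def omegaMat (m : ℕ) (a : ZMod (2 * m)) : Matrix (ZMod (2 * m)) (ZMod (2 * m)) ℂ :=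
  fun r r' => if r' = a * r then 1 else 0

/-- The projector `P = (∏_{n ∈ l} (I + Ω(a n))/2) · (I − Ω(a m))/2`, the product
being taken along the list `l` of elements of `K`. -/
noncomputable def projMat (m : ℕ) [NeZero m] (A : ℕ → ZMod (2 * m)) (l : List ℕ) :
    Matrix (ZMod (2 * m)) (ZMod (2 * m)) ℂ :=
  (l.map fun n => ((1 : ℂ) / 2) • (1 + omegaMat m (A n))).prod *
    (((1 : ℂ) / 2) • (1 - omegaMat m (A m)))

set_option linter.unusedSectionVars false
set_option maxHeartbeats 1000000

namespace WeilAux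

noncomputable def eN (m : ℕ) (N : ℕ) : ℂ :=
  Complex.exp (-(2 * Real.pi * Complex.I * (N : ℂ)) / (2 * (m:ℂ)))

variable {m : ℕ} [NeZero m]

lemma twom_ne : (2 * (m:ℂ)) ≠ 0 := by
  have := NeZero.ne m
  simp [this]

lemma eN_add (N N' : ℕ) : eN m (N + N') = eN m N * eN m N' := by
  rw [eN, eN, eN, ← Complex.exp_add]
  congr 1
  push_cast
  ring

lemma eN_period (q s : ℕ) : eN m (2 * m * q + s) = eN m s := by
  rw [eN_add]
  have h1 : eN m (2 * m * q) = 1 := by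
    rw [eN]
    have hm : (m:ℂ) ≠ 0 := Nat.cast_ne_zero.2 (NeZero.ne m)
    have : (-(2 * Real.pi * Complex.I * ((2*m*q : ℕ) : ℂ)) / (2 * (m:ℂ)))
        = ((-(q:ℤ)) : ℂ) * (2 * Real.pi * Complex.I) := by
      field_simp
      push_cast
      ring
    rw [this]
    exact_mod_cast Complex.exp_int_mul_two_pi_mul_I (-(q:ℤ))
  rw [h1, one_mul]

lemma eN_mod (N : ℕ) : eN m N = eN m (N % (2*m)) := by
  conv_lhs => rw [← Nat.div_add_mod N (2*m)]
  rw [eN_period]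

lemma eN_val_mul (r r' : ZMod (2*m)) : eN m (r.val * r'.val) = eN m ((r * r').val) := by
  rw [eN_mod]
  congr 1
  rw [ZMod.val_mul]

lemma eN_pow (k N : ℕ) : eN m (k * N) = (eN m N) ^ k := by
  rw [eN, eN, ← Complex.exp_nat_mul]
  congr 1
  push_cast
  ring

lemma sum_val (f : ℕ → ℂ) :
    ∑ s : ZMod (2*m), f s.val = ∑ j ∈ Finset.range (2*m), f j := by
  have h2m : NeZero (2*m) := ⟨by have := NeZero.ne m; omega⟩
  refine Finset.sum_nbij' (fun s : ZMod (2*m) => s.val) (fun j => (j : ZMod (2*m))) ?_ ?_ ?_ ?_ ?_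
  · intro a _; exact Finset.mem_range.2 (ZMod.val_lt a)
  · intro a _; exact Finset.mem_univ _
  · intro a _; exact ZMod.natCast_rightInverse a
  · intro a ha; exact ZMod.val_cast_of_lt (Finset.mem_range.1 ha)
  · intro a _; rfl

lemma dvd_iff_neg (r r' : ZMod (2*m)) : (2*m) ∣ (r.val + r'.val) ↔ r' = -r := by
  have h2m : NeZero (2*m) := ⟨by have := NeZero.ne m; omega⟩
  rw [← ZMod.natCast_eq_zero_iff]
  push_cast
  rw [ZMod.natCast_val, ZMod.natCast_val, ZMod.cast_id, ZMod.cast_id]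
  constructor
  · intro h; linear_combination h
  · intro h; rw [h]; ring

lemma eN_ne_one {d : ℕ} (h : ¬ (2*m) ∣ d) : eN m d ≠ 1 := by
  intro hone
  rw [eN, Complex.exp_eq_one_iff] at hone
  obtain ⟨n, hn⟩ := hone
  rw [div_eq_iff twom_ne] at hn
  have hc : (-(d:ℂ)) * (2*Real.pi*Complex.I) = ((n:ℂ)*(2*m)) * (2*Real.pi*Complex.I) := by
    linear_combination hn
  have hne : (2*(Real.pi:ℂ)*Complex.I) ≠ 0 := by
    simp [Real.pi_ne_zero, Complex.I_ne_zero]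
  have h2 := mul_right_cancel₀ hne hc
  have h3 : -(d:ℤ) = n * (2*m) := by exact_mod_cast h2
  have h4 : (2*m : ℤ) ∣ (d:ℤ) := ⟨-n, by linarith⟩
  exact h (by exact_mod_cast h4)

lemma eN_zero : eN m 0 = 1 := by simp [eN]

lemma eN_of_dvd {d : ℕ} (h : (2*m) ∣ d) : eN m d = 1 := by
  have hz : d % (2*m) = 0 := Nat.mod_eq_zero_of_dvd h
  rw [eN_mod, hz, eN_zero]

end WeilAux
namespace WeilAux

lemma weilS_apply (m : ℕ) [NeZero m] (r r' : ZMod (2*m)) :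
    weilS m r r' = ((1:ℂ)/Real.sqrt (2*m)) * eN m ((r * r').val) := by
  rw [weilS, ← eN_val_mul]
  rfl

lemma c_sq (m : ℕ) [NeZero m] :
    ((1:ℂ)/Real.sqrt (2*m)) * ((1:ℂ)/Real.sqrt (2*m)) = 1/(2*(m:ℂ)) := by
  rw [div_mul_div_comm, one_mul]
  congr 1
  rw [← Complex.ofReal_mul, Real.mul_self_sqrt (by positivity)]
  push_cast
  ring

variable {m : ℕ} [NeZero m]

lemma omegaMat_mul (a b : ZMod (2*m)) :
    omegaMat m a * omegaMat m b = omegaMat m (b * a) := by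
  ext r r'
  rw [Matrix.mul_apply]
  simp only [omegaMat, ite_mul, one_mul, zero_mul]
  rw [Finset.sum_ite_eq' Finset.univ (a * r) (fun s => if r' = b * s then (1:ℂ) else 0)]
  simp [mul_assoc]

lemma omegaMat_one : omegaMat m 1 = 1 := by
  ext r r'
  simp [omegaMat, Matrix.one_apply, eq_comm]

lemma omegaMat_comm (a b : ZMod (2*m)) :
    omegaMat m a * omegaMat m b = omegaMat m b * omegaMat m a := by
  rw [omegaMat_mul, omegaMat_mul, mul_comm b a]

lemma omegaMat_sq {a : ZMod (2*m)} (ha : a * a = 1) :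
    omegaMat m a * omegaMat m a = 1 := by
  rw [omegaMat_mul, ha, omegaMat_one]

lemma weilS_comm_omega {a : ZMod (2*m)} (ha : a * a = 1) :
    weilS m * omegaMat m a = omegaMat m a * weilS m := by
  ext r r'
  rw [Matrix.mul_apply, Matrix.mul_apply]
  have hcond : ∀ s : ZMod (2*m), (r' = a * s) ↔ (s = a * r') := by
    intro s
    constructor
    · intro h; rw [h, ← mul_assoc, ha, one_mul]
    · intro h; rw [h, ← mul_assoc, ha, one_mul]
  calc ∑ s : ZMod (2*m), weilS m r s * omegaMat m a s r'
      = ∑ s : ZMod (2*m), (if s = a * r' then weilS m r s else 0) := by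
        refine Finset.sum_congr rfl fun s _ => ?_
        simp only [omegaMat, mul_ite, mul_one, mul_zero, hcond s]
    _ = weilS m r (a * r') := by
        rw [Finset.sum_ite_eq' Finset.univ (a * r') (fun s => weilS m r s)]
        simp
    _ = weilS m (a * r) r' := by
        rw [weilS_apply, weilS_apply, show r * (a * r') = (a * r) * r' by ring]
    _ = ∑ s : ZMod (2*m), omegaMat m a r s * weilS m s r' := by
        simp only [omegaMat, ite_mul, one_mul, zero_mul]
        rw [Finset.sum_ite_eq' Finset.univ (a * r) (fun s => weilS m s r')]
        simp

lemma weilS_sq : weilS m * weilS m = omegaMat m (-1) := by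
  ext r r'
  rw [Matrix.mul_apply]
  have hterm : ∀ s : ZMod (2*m), weilS m r s * weilS m s r' =
      (1/(2*(m:ℂ))) * (eN m (r.val + r'.val)) ^ s.val := by
    intro s
    rw [weilS_apply, weilS_apply, ← eN_val_mul, ← eN_val_mul]
    have he : eN m (r.val * s.val) * eN m (s.val * r'.val)
        = (eN m (r.val + r'.val)) ^ s.val := by
      rw [← eN_add, ← eN_pow]
      congr 1
      ring
    calc ((1:ℂ)/Real.sqrt (2*m)) * eN m (r.val * s.val) *
          (((1:ℂ)/Real.sqrt (2*m)) * eN m (s.val * r'.val))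
        = (((1:ℂ)/Real.sqrt (2*m)) * ((1:ℂ)/Real.sqrt (2*m))) *
          (eN m (r.val * s.val) * eN m (s.val * r'.val)) := by ring
      _ = (1/(2*(m:ℂ))) * (eN m (r.val + r'.val)) ^ s.val := by rw [c_sq, he]
  rw [Finset.sum_congr rfl (fun s _ => hterm s), ← Finset.mul_sum]
  rw [sum_val (fun j => (eN m (r.val + r'.val)) ^ j)]
  have hm : (2*(m:ℂ)) ≠ 0 := twom_ne
  by_cases hd : (2*m) ∣ (r.val + r'.val)
  · rw [eN_of_dvd hd]
    simp only [one_pow, Finset.sum_const, Finset.card_range, nsmul_eq_mul, mul_one]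
    rw [omegaMat, if_pos (by rw [neg_one_mul]; exact (dvd_iff_neg r r').1 hd)]
    push_cast
    field_simp
    exact div_self (Nat.cast_ne_zero.2 (NeZero.ne m))
  · have hz : eN m (r.val + r'.val) ≠ 1 := eN_ne_one hd
    rw [geom_sum_eq hz]
    have hpow : (eN m (r.val + r'.val)) ^ (2*m) = 1 := by
      rw [← eN_pow]
      exact eN_of_dvd ⟨_, rfl⟩
    rw [hpow, sub_self, zero_div, mul_zero, omegaMat,
      if_neg (by rw [neg_one_mul]; exact fun h => hd ((dvd_iff_neg r r').2 h))]

lemma lift_eq (a : ZMod (2*m)) : (((a.val : ℤ)) : ZMod (2*m)) = a := by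
  have : NeZero (2*m) := ⟨by have := NeZero.ne m; omega⟩
  push_cast
  exact ZMod.natCast_rightInverse a

lemma lift_eq' (a : ZMod (2*m)) : ((a.val : ℕ) : ZMod (2*m)) = a := by
  have : NeZero (2*m) := ⟨by have := NeZero.ne m; omega⟩
  exact ZMod.natCast_rightInverse a

lemma a_sq_eq_one {n : ℕ} {a : ZMod (2*m)} (hn : IsExactDivisor m n) (h : IsAOf m n a) :
    a * a = 1 := by
  obtain ⟨h1, h2⟩ := h (a.val : ℤ) (lift_eq a)
  have hmn : (n:ℤ) * ((m / n : ℕ) : ℤ) = (m:ℤ) := by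
    exact_mod_cast congrArg (Nat.cast : ℕ → ℤ) (Nat.mul_div_cancel' hn.2.1)
  have h4 : (2*(n:ℤ)) * (2*((m / n : ℕ):ℤ)) ∣ ((a.val:ℤ) + 1) * ((a.val:ℤ) - 1) :=
    mul_dvd_mul h1 h2
  have h5 : (2*(m:ℤ)) ∣ ((a.val:ℤ) * (a.val:ℤ) - 1) := by
    have h6 : (2*(n:ℤ)) * (2*((m / n : ℕ):ℤ)) = 2 * (2*(m:ℤ)) := by
      rw [← hmn]; ring
    refine dvd_trans (Dvd.intro_left 2 rfl) ?_
    rw [← h6]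
    convert h4 using 1
    rfl
    ring
  have h7 : (((a.val:ℤ) * (a.val:ℤ) - 1 : ℤ) : ZMod (2*m)) = 0 := by
    rw [ZMod.intCast_zmod_eq_zero_iff_dvd]
    exact_mod_cast h5
  push_cast at h7
  rw [lift_eq'] at h7
  linear_combination h7

lemma a_m_eq_neg_one {a : ZMod (2*m)} (h : IsAOf m m a) : a = -1 := by
  obtain ⟨h1, _⟩ := h (a.val : ℤ) (lift_eq a)
  have h7 : (((a.val:ℤ) + 1 : ℤ) : ZMod (2*m)) = 0 := by
    rw [ZMod.intCast_zmod_eq_zero_iff_dvd]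
    exact_mod_cast h1
  push_cast at h7
  rw [lift_eq'] at h7
  linear_combination h7

lemma exact_self : IsExactDivisor m m :=
  ⟨Nat.pos_of_ne_zero (NeZero.ne m), dvd_refl m, by rw [Nat.div_self (Nat.pos_of_ne_zero (NeZero.ne m))]; simp⟩

end WeilAux
/-- the `Ω(n)` are commuting involutions, `P` is a projector commuting
with `𝒮`, `𝒮² = Ω(m)` (the permutation matrix of `r ↦ −r`), and `(𝒮P)² = −P`. -/
theorem weil_projector_properties (m : ℕ) [NeZero m]
    (A : ℕ → ZMod (2 * m)) (hA : ∀ n, IsExactDivisor m n → IsAOf m n (A n))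
    (K : Finset ℕ) (hK : ∀ n ∈ K, IsExactDivisor m n) :
    -- (1) commuting involutions
    ((∀ n n', IsExactDivisor m n → IsExactDivisor m n' →
        omegaMat m (A n) * omegaMat m (A n') = omegaMat m (A n') * omegaMat m (A n)) ∧
     (∀ n, IsExactDivisor m n → omegaMat m (A n) * omegaMat m (A n) = 1)) ∧
    -- (2), (3), (5): for any ordering of the product defining P
    (∀ l : List ℕ, l.Nodup → l.toFinset = K →
      projMat m A l * projMat m A l = projMat m A l ∧
      weilS m * projMat m A l = projMat m A l * weilS m ∧
      (weilS m * projMat m A l) * (weilS m * projMat m A l) = -(projMat m A l)) ∧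
    -- (4) 𝒮² = Ω(m), i.e. the permutation matrix of r ↦ −r
    (weilS m * weilS m = omegaMat m (A m) ∧
     ∀ r r' : ZMod (2 * m), (weilS m * weilS m) r r' = if r' = -r then 1 else 0) := by
  classical
  have hsq : ∀ n, IsExactDivisor m n → (A n) * (A n) = 1 :=
    fun n hn => WeilAux.a_sq_eq_one hn (hA n hn)
  have hmex : IsExactDivisor m m := WeilAux.exact_self
  have hAm : A m = -1 := WeilAux.a_m_eq_neg_one (hA m hmex)
  have homega_sq : ∀ n, IsExactDivisor m n → omegaMat m (A n) * omegaMat m (A n) = 1 :=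
    fun n hn => WeilAux.omegaMat_sq (hsq n hn)
  have hScomm : ∀ n, IsExactDivisor m n →
      weilS m * omegaMat m (A n) = omegaMat m (A n) * weilS m :=
    fun n hn => WeilAux.weilS_comm_omega (hsq n hn)
  have hcommΩ : ∀ a b : ZMod (2*m), Commute (omegaMat m a) (omegaMat m b) :=
    fun a b => WeilAux.omegaMat_comm a b
  set E : ℕ → Matrix (ZMod (2*m)) (ZMod (2*m)) ℂ :=
    fun n => ((1:ℂ)/2) • (1 + omegaMat m (A n)) with hEdef
  set F : Matrix (ZMod (2*m)) (ZMod (2*m)) ℂ :=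
    ((1:ℂ)/2) • (1 - omegaMat m (A m)) with hFdef
  have hCommEE : ∀ n n', Commute (E n) (E n') := fun n n' =>
    (((Commute.one_left _).add_left
      ((Commute.one_right _).add_right (hcommΩ (A n) (A n')))).smul_left _).smul_right _
  have hCommFE : ∀ n, Commute F (E n) := fun n =>
    (((Commute.one_left (1 + omegaMat m (A n))).sub_left
      ((Commute.one_right (omegaMat m (A m))).add_right (hcommΩ (A m) (A n)))).smul_left _).smul_right _
  have hCommΩmE : ∀ n, Commute (omegaMat m (A m)) (E n) := fun n =>
    ((Commute.one_right (omegaMat m (A m))).add_right (hcommΩ (A m) (A n))).smul_right _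
  have hidem : ∀ n, IsExactDivisor m n → E n * E n = E n := by
    intro n hn
    rw [hEdef]
    simp only
    rw [smul_mul_assoc, mul_smul_comm, smul_smul]
    have hx : (1 + omegaMat m (A n)) * (1 + omegaMat m (A n))
        = (1 + omegaMat m (A n)) + (1 + omegaMat m (A n)) := by
      calc (1 + omegaMat m (A n)) * (1 + omegaMat m (A n))
          = 1 + omegaMat m (A n) + omegaMat m (A n)
            + omegaMat m (A n) * omegaMat m (A n) := by noncomm_ring
        _ = _ := by rw [homega_sq n hn]; abel
    rw [hx, smul_add, ← add_smul]
    norm_num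
  have hF_idem : F * F = F := by
    rw [hFdef]
    rw [smul_mul_assoc, mul_smul_comm, smul_smul]
    have hx : (1 - omegaMat m (A m)) * (1 - omegaMat m (A m))
        = (1 - omegaMat m (A m)) + (1 - omegaMat m (A m)) := by
      rw [sub_mul, mul_sub, mul_sub, homega_sq m hmex]
      simp only [one_mul, mul_one]
      abel
    rw [hx, smul_add, ← add_smul]
    norm_num
  have hΩF : omegaMat m (A m) * F = -F := by
    rw [hFdef]
    rw [mul_smul_comm, mul_sub, mul_one, homega_sq m hmex, ← smul_neg]
    congr 1
    abel
  refine ⟨⟨fun n n' _ _ => WeilAux.omegaMat_comm _ _, homega_sq⟩, ?_, ?_⟩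
  · intro l _ hlK
    have hl : ∀ x ∈ l, IsExactDivisor m x := fun x hx =>
      hK x (hlK ▸ List.mem_toFinset.2 hx)
    have hPdef : projMat m A l = (l.map E).prod * F := rfl
    have hCommSE : ∀ n, IsExactDivisor m n → Commute (weilS m) (E n) := fun n hn =>
      ((Commute.one_right (weilS m)).add_right (hScomm n hn)).smul_right _
    have hCommSF : Commute (weilS m) F :=
      ((Commute.one_right (weilS m)).sub_right (hScomm m hmex)).smul_right _
    have hCommSQ : Commute (weilS m) ((l.map E).prod) := by
      refine Commute.list_prod_right _ _ ?_
      intro x hx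
      obtain ⟨n, hn, rfl⟩ := List.mem_map.1 hx
      exact hCommSE n (hl n hn)
    have hCommFQ : Commute F ((l.map E).prod) := by
      refine Commute.list_prod_right _ _ ?_
      intro x hx
      obtain ⟨n, hn, rfl⟩ := List.mem_map.1 hx
      exact hCommFE n
    have hCommΩQ : Commute (omegaMat m (A m)) ((l.map E).prod) := by
      refine Commute.list_prod_right _ _ ?_
      intro x hx
      obtain ⟨n, hn, rfl⟩ := List.mem_map.1 hx
      exact hCommΩmE n
    have hQ_idem : ∀ t : List ℕ, (∀ x ∈ t, IsExactDivisor m x) →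
        (t.map E).prod * (t.map E).prod = (t.map E).prod := by
      intro t
      induction t with
      | nil => simp
      | cons a s ih =>
        intro ht
        simp only [List.map_cons, List.prod_cons]
        have hcomm_sa : Commute ((s.map E).prod) (E a) := by
          refine Commute.list_prod_left _ _ ?_
          intro x hx
          obtain ⟨n, hn, rfl⟩ := List.mem_map.1 hx
          exact hCommEE n a
        rw [hcomm_sa.mul_mul_mul_comm, hidem a (ht a List.mem_cons_self),
          ih (fun x hx => ht x (List.mem_cons_of_mem a hx))]
    have hQQ := hQ_idem l hl
    have hP : projMat m A l * projMat m A l = projMat m A l := by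
      rw [hPdef, hCommFQ.mul_mul_mul_comm, hQQ, hF_idem]
    have hSPcomm : Commute (weilS m) (projMat m A l) := by
      rw [hPdef]; exact hCommSQ.mul_right hCommSF
    refine ⟨hP, hSPcomm.eq, ?_⟩
    have hc : Commute (projMat m A l) (weilS m) := hSPcomm.symm
    calc (weilS m * projMat m A l) * (weilS m * projMat m A l)
        = (weilS m * weilS m) * (projMat m A l * projMat m A l) :=
          hc.mul_mul_mul_comm _ _
      _ = omegaMat m (A m) * projMat m A l := by
          rw [WeilAux.weilS_sq, hP, hAm]
      _ = -(projMat m A l) := by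
          rw [hPdef, ← mul_assoc, hCommΩQ.eq, mul_assoc, hΩF]
          exact mul_neg ((List.map E l).prod) F
  · constructor
    · rw [hAm]; exact WeilAux.weilS_sq
    · intro r r'
      rw [WeilAux.weilS_sq]
      simp [omegaMat, neg_one_mul]
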